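/- arXiv:2411.13711 — 3 statements merged into one kernel-verified Lean document; each statement's English description precedes it below -/
import Mathlib

section
/- Let T_m = C_α·ln^{ν₁}(m+3)/(m+3)^{ν₂} with ν₁ ≥ 0, ν₂ ∈ (1/2, 1], and let α_t = C_α/(t+3)^ν with ν ∈ (2/3, 1) and 1/2 < ν₂ < ν/(2−ν). Let t_0 = 0 and t_{m+1} = min{k : ∑_{t=t_m}^{k−1} α_t ≥ T_m}. Then there exist a constant K and an integer m_0 such that for all m ≥ m_0 and all t ≥ t_m, α_t ≤ K·T_m². -/
open Finset Real

/-- MVT bounds for one step of `x ↦ x ^ q`. -/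
lemma rpow_step_bounds {q x : ℝ} (hq0 : 0 < q) (hq1 : q < 1) (hx : 0 < x) :
    q * (x + 1) ^ (q - 1) ≤ (x + 1) ^ q - x ^ q ∧
      (x + 1) ^ q - x ^ q ≤ q * x ^ (q - 1) := by
  have hx1 : x < x + 1 := by linarith
  have hcont : ContinuousOn (fun y : ℝ => y ^ q) (Set.Icc x (x + 1)) :=
    ContinuousOn.rpow_const continuousOn_id (fun y _ => Or.inr hq0.le)
  have hderiv : ∀ y ∈ Set.Ioo x (x + 1),
      HasDerivAt (fun y : ℝ => y ^ q) (q * y ^ (q - 1)) y := by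
    intro y hy
    exact Real.hasDerivAt_rpow_const (Or.inl (by nlinarith [hy.1] : y ≠ 0))
  obtain ⟨c, hc, hceq⟩ := exists_hasDerivAt_eq_slope (fun y : ℝ => y ^ q)
    (fun y => q * y ^ (q - 1)) hx1 hcont hderiv
  have hden : (x + 1) - x = 1 := by ring
  rw [hden, div_one] at hceq
  have hc0 : 0 < c := lt_trans hx hc.1
  have h1 : c ^ (q - 1) ≤ x ^ (q - 1) :=
    Real.rpow_le_rpow_of_nonpos hx hc.1.le (by linarith)
  have h2 : (x + 1) ^ (q - 1) ≤ c ^ (q - 1) :=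
    Real.rpow_le_rpow_of_nonpos hc0 hc.2.le (by linarith)
  constructor
  · rw [← hceq]; exact mul_le_mul_of_nonneg_left h2 hq0.le
  · rw [← hceq]; exact mul_le_mul_of_nonneg_left h1 hq0.le

/-- Upper bound for sums of `(τ+3)^(-p)`, `0 < p < 1`. -/
lemma sum_rpow_neg_le {p : ℝ} (hp0 : 0 < p) (hp1 : p < 1) (n : ℕ) :
    ∑ τ ∈ Finset.range n, ((τ : ℝ) + 3) ^ (-p) ≤ ((n : ℝ) + 3) ^ (1 - p) / (1 - p) := by
  have hq0 : 0 < 1 - p := by linarith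
  have key : ∑ τ ∈ Finset.range n, ((τ : ℝ) + 3) ^ (-p)
      ≤ ((n : ℝ) + 2) ^ (1 - p) / (1 - p) := by
    induction n with
    | zero =>
      simp only [Finset.range_zero, Finset.sum_empty]
      positivity
    | succ n ih =>
      rw [Finset.sum_range_succ]
      have hstep := (rpow_step_bounds hq0 (by linarith) (show (0:ℝ) < (n : ℝ) + 2 by positivity)).1
      have hrw : ((n : ℝ) + 2 + 1) = ((n : ℝ) + 3) := by ring
      rw [hrw] at hstep
      have hexp : (1 - p) - 1 = -p := by ring
      rw [hexp] at hstep
      have hcast : ((n + 1 : ℕ) : ℝ) + 2 = (n : ℝ) + 3 := by push_cast; ring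
      rw [hcast]
      have : ((n : ℝ) + 3) ^ (-p) ≤ (((n : ℝ) + 3) ^ (1 - p) - ((n : ℝ) + 2) ^ (1 - p)) / (1 - p) := by
        rw [le_div_iff₀ hq0]
        linarith [hstep]
      have := add_le_add ih this
      calc ∑ τ ∈ Finset.range n, ((τ : ℝ) + 3) ^ (-p) + ((n : ℝ) + 3) ^ (-p)
          ≤ ((n : ℝ) + 2) ^ (1 - p) / (1 - p)
            + (((n : ℝ) + 3) ^ (1 - p) - ((n : ℝ) + 2) ^ (1 - p)) / (1 - p) := this
        _ = ((n : ℝ) + 3) ^ (1 - p) / (1 - p) := by ring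
  refine key.trans ?_
  have hb : ((n:ℝ)+2)^(1-p) ≤ ((n:ℝ)+3)^(1-p) :=
    Real.rpow_le_rpow (by positivity) (by linarith) hq0.le
  exact (div_le_div_iff_of_pos_right hq0).mpr hb

/-- Lower bound for sums of `(j+3)^(-p)`, `0 < p < 1`. -/
lemma le_sum_rpow_neg {p : ℝ} (hp0 : 0 < p) (hp1 : p < 1) (m : ℕ) :
    (((m : ℝ) + 3) ^ (1 - p) - 3 ^ (1 - p)) / (1 - p)
      ≤ ∑ j ∈ Finset.range m, ((j : ℝ) + 3) ^ (-p) := by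
  have hq0 : 0 < 1 - p := by linarith
  induction m with
  | zero => simp
  | succ m ih =>
    rw [Finset.sum_range_succ]
    have hstep := (rpow_step_bounds hq0 (by linarith) (show (0:ℝ) < (m : ℝ) + 3 by positivity)).2
    have hexp : (1 - p) - 1 = -p := by ring
    rw [hexp] at hstep
    have hcast : ((m + 1 : ℕ) : ℝ) + 3 = ((m : ℝ) + 3) + 1 := by push_cast; ring
    rw [hcast]
    have h1 : ((((m : ℝ) + 3) + 1) ^ (1 - p) - ((m : ℝ) + 3) ^ (1 - p)) / (1 - p)
        ≤ ((m : ℝ) + 3) ^ (-p) := by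
      rw [div_le_iff₀ hq0]
      linarith [hstep]
    have := add_le_add ih h1
    calc ((((m : ℝ) + 3) + 1) ^ (1 - p) - 3 ^ (1 - p)) / (1 - p)
        = (((m : ℝ) + 3) ^ (1 - p) - 3 ^ (1 - p)) / (1 - p)
          + ((((m : ℝ) + 3) + 1) ^ (1 - p) - ((m : ℝ) + 3) ^ (1 - p)) / (1 - p) := by ring
      _ ≤ _ := this

theorem lr_bound_on_intervals (Cα ν ν₂ : ℝ) (hCα : 0 < Cα)
    (hν : ν ∈ Set.Ioo (2/3 : ℝ) 1) (hν₂ : 1/2 < ν₂) (hν₂' : ν₂ < ν / (2 - ν))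
    (α : ℕ → ℝ) (hα : ∀ t : ℕ, α t = Cα / ((t : ℝ) + 3) ^ ν)
    (T : ℕ → ℝ) (hT : ∀ m : ℕ, T m = Cα / ((m : ℝ) + 3) ^ ν₂)
    (t : ℕ → ℕ) (ht0 : t 0 = 0)
    (htsum : ∀ m, T m ≤ ∑ τ ∈ Finset.Ico (t m) (t (m + 1)), α τ)
    (htmin : ∀ m k, t m ≤ k → k < t (m + 1) → ∑ τ ∈ Finset.Ico (t m) k, α τ < T m) :
    ∃ (K : ℝ) (m₀ : ℕ), ∀ m ≥ m₀, ∀ s ≥ t m, α s ≤ K * (T m) ^ 2 := by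
  obtain ⟨hν1, hν2⟩ := hν
  have hν2mν : 0 < 2 - ν := by linarith
  have hν₂1 : ν₂ < 1 := by
    have : ν / (2 - ν) < 1 := by rw [div_lt_one hν2mν]; linarith
    linarith
  have hν₂0 : 0 < ν₂ := by linarith
  have hν0 : 0 < ν := by linarith
  -- T and α rewritten with negative exponents
  have hTpos : ∀ m : ℕ, 0 < T m := by
    intro m; rw [hT m]; positivity
  have hαpos : ∀ s : ℕ, 0 < α s := by
    intro s; rw [hα s]; positivity
  -- t is strictly monotone in one step
  have htlt : ∀ m, t m < t (m + 1) := by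
    intro m
    by_contra h
    push_neg at h
    have : Finset.Ico (t m) (t (m + 1)) = ∅ := Finset.Ico_eq_empty (by omega)
    have h2 := htsum m
    rw [this, Finset.sum_empty] at h2
    exact absurd h2 (not_le.mpr (hTpos m))
  have htmono : ∀ m, t 0 ≤ t m := fun m => by
    induction m with
    | zero => exact le_rfl
    | succ m ih => exact ih.trans (htlt m).le
  -- partial sums of T bounded by partial sums of α up to t m
  have hpartial : ∀ m, ∑ j ∈ Finset.range m, T j ≤ ∑ τ ∈ Finset.range (t m), α τ := by
    intro m
    induction m with
    | zero => simp [ht0]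
    | succ m ih =>
      rw [Finset.sum_range_succ]
      have h1 : ∑ τ ∈ Finset.range (t m), α τ + ∑ τ ∈ Finset.Ico (t m) (t (m+1)), α τ
          = ∑ τ ∈ Finset.range (t (m+1)), α τ := by
        rw [Finset.range_eq_Ico, Finset.range_eq_Ico]
        exact Finset.sum_Ico_consecutive (f := α) (Nat.zero_le _) (htlt m).le
      calc ∑ j ∈ Finset.range m, T j + T m
          ≤ ∑ τ ∈ Finset.range (t m), α τ + ∑ τ ∈ Finset.Ico (t m) (t (m+1)), α τ :=
            add_le_add ih (htsum m)
        _ = _ := h1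
  -- numeric bounds on partial sums
  have hq0 : 0 < 1 - ν := by linarith
  have hq₂0 : 0 < 1 - ν₂ := by linarith
  -- combine: lower bound on (t m + 3)^(1-ν)
  have hkey : ∀ m : ℕ, (((m : ℝ) + 3) ^ (1 - ν₂) - 3 ^ (1 - ν₂)) / (1 - ν₂)
      ≤ ((t m : ℝ) + 3) ^ (1 - ν) / (1 - ν) := by
    intro m
    have h1 : Cα * ((((m : ℝ) + 3) ^ (1 - ν₂) - 3 ^ (1 - ν₂)) / (1 - ν₂))
        ≤ ∑ j ∈ Finset.range m, T j := by
      have : ∑ j ∈ Finset.range m, T j = Cα * ∑ j ∈ Finset.range m, ((j : ℝ) + 3) ^ (-ν₂) := by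
        rw [Finset.mul_sum]
        refine Finset.sum_congr rfl fun j _ => ?_
        rw [hT j, Real.rpow_neg (by positivity), div_eq_mul_inv]
      rw [this]
      exact mul_le_mul_of_nonneg_left (le_sum_rpow_neg hν₂0 hν₂1 m) hCα.le
    have h2 : ∑ τ ∈ Finset.range (t m), α τ
        ≤ Cα * (((t m : ℝ) + 3) ^ (1 - ν) / (1 - ν)) := by
      have : ∑ τ ∈ Finset.range (t m), α τ = Cα * ∑ τ ∈ Finset.range (t m), ((τ : ℝ) + 3) ^ (-ν) := by
        rw [Finset.mul_sum]
        refine Finset.sum_congr rfl fun τ _ => ?_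
        rw [hα τ, Real.rpow_neg (by positivity), div_eq_mul_inv]
      rw [this]
      exact mul_le_mul_of_nonneg_left (sum_rpow_neg_le hν0 hν2 (t m)) hCα.le
    have := h1.trans ((hpartial m).trans h2)
    exact le_of_mul_le_mul_left this hCα
  -- choose m₀ with (m+3)^(1-ν₂) ≥ 6 for m ≥ m₀
  obtain ⟨m₀, hm₀⟩ := exists_nat_ge ((6 : ℝ) ^ ((1 - ν₂)⁻¹))
  set c : ℝ := (1 - ν) / (2 * (1 - ν₂)) with hc
  have hcpos : 0 < c := by positivity
  set r : ℝ := ν / (1 - ν) with hr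
  have hrpos : 0 < r := by positivity
  refine ⟨c ^ (-r) / Cα, m₀, fun m hm s hs => ?_⟩
  have hm3 : (3 : ℝ) ≤ (m : ℝ) + 3 := by have : (0:ℝ) ≤ (m:ℝ) := Nat.cast_nonneg m; linarith
  -- step 1: (m+3)^(1-ν₂) ≥ 6, hence (m+3)^(1-ν₂) - 3^(1-ν₂) ≥ (m+3)^(1-ν₂)/2
  have h6 : (6 : ℝ) ≤ ((m : ℝ) + 3) ^ (1 - ν₂) := by
    have hb : (6 : ℝ) ^ ((1 - ν₂)⁻¹) ≤ (m : ℝ) + 3 := by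
      refine hm₀.trans ?_
      have : (m₀ : ℝ) ≤ (m : ℝ) := Nat.cast_le.mpr hm
      linarith
    calc (6 : ℝ) = ((6 : ℝ) ^ ((1 - ν₂)⁻¹)) ^ (1 - ν₂) :=
          (Real.rpow_inv_rpow (by norm_num) hq₂0.ne').symm
      _ ≤ ((m : ℝ) + 3) ^ (1 - ν₂) :=
          Real.rpow_le_rpow (by positivity) hb hq₂0.le
  have h3le : (3 : ℝ) ^ (1 - ν₂) ≤ 3 := by
    calc (3 : ℝ) ^ (1 - ν₂) ≤ (3 : ℝ) ^ (1 : ℝ) :=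
          Real.rpow_le_rpow_of_exponent_le (by norm_num) (by linarith)
      _ = 3 := Real.rpow_one 3
  have hhalf : ((m : ℝ) + 3) ^ (1 - ν₂) / 2 ≤ ((m : ℝ) + 3) ^ (1 - ν₂) - 3 ^ (1 - ν₂) := by
    nlinarith [h6, h3le]
  -- step 2: lower bound on (t m + 3)^(1-ν)
  have hlb : c * ((m : ℝ) + 3) ^ (1 - ν₂) ≤ ((t m : ℝ) + 3) ^ (1 - ν) := by
    have h1 := hkey m
    have h2 : (((m : ℝ) + 3) ^ (1 - ν₂) / 2) / (1 - ν₂)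
        ≤ ((t m : ℝ) + 3) ^ (1 - ν) / (1 - ν) :=
      le_trans ((div_le_div_iff_of_pos_right hq₂0).mpr hhalf) h1
    rw [div_le_div_iff₀ (by positivity) hq0] at h2
    rw [hc, div_mul_eq_mul_div, div_le_iff₀ (by positivity)]
    nlinarith [h2]
  -- step 3: raise to power r = ν/(1-ν)
  have htm3 : (0 : ℝ) < (t m : ℝ) + 3 := by positivity
  have hmain : c ^ r * ((m : ℝ) + 3) ^ ((1 - ν₂) * r) ≤ ((t m : ℝ) + 3) ^ ν := by
    have h1 : (c * ((m : ℝ) + 3) ^ (1 - ν₂)) ^ r ≤ (((t m : ℝ) + 3) ^ (1 - ν)) ^ r :=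
      Real.rpow_le_rpow (by positivity) hlb hrpos.le
    calc c ^ r * ((m : ℝ) + 3) ^ ((1 - ν₂) * r)
        = (c * ((m : ℝ) + 3) ^ (1 - ν₂)) ^ r := by
          rw [Real.mul_rpow hcpos.le (by positivity), ← Real.rpow_mul (by positivity)]
      _ ≤ (((t m : ℝ) + 3) ^ (1 - ν)) ^ r := h1
      _ = ((t m : ℝ) + 3) ^ ν := by
          rw [← Real.rpow_mul htm3.le]
          congr 1
          field_simp [hr]
          rw [hr]; field_simp [hq0.ne']
  -- exponent comparison: (1-ν₂)*r ≥ 2*ν₂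
  have hexp : 2 * ν₂ ≤ (1 - ν₂) * r := by
    have hd : ν₂ * (2 - ν) < ν := (lt_div_iff₀ hν2mν).mp hν₂'
    rw [hr, ← mul_div_assoc, le_div_iff₀ hq0]
    nlinarith [hd]
  -- α s ≤ α (t m)
  have hαle : α s ≤ α (t m) := by
    rw [hα s, hα (t m)]
    have hle : ((t m : ℝ) + 3) ^ ν ≤ ((s : ℝ) + 3) ^ ν := by
      apply Real.rpow_le_rpow htm3.le _ hν0.le
      have : (t m : ℝ) ≤ (s : ℝ) := Nat.cast_le.mpr hs
      linarith
    exact div_le_div_of_nonneg_left hCα.le (by positivity) hle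
  -- final chain
  have hpow2 : (((m:ℝ)+3) ^ ν₂) ^ 2 = ((m:ℝ)+3) ^ (2*ν₂) := by
    rw [← Real.rpow_natCast (((m:ℝ)+3)^ν₂) 2, ← Real.rpow_mul (by positivity)]
    norm_num [mul_comm]
  rw [hT m, div_pow, hpow2]
  have hb1 : (1:ℝ) ≤ (m:ℝ)+3 := by linarith
  have hmono : ((m : ℝ) + 3) ^ (2*ν₂) ≤ ((m : ℝ) + 3) ^ ((1-ν₂)*r) :=
    Real.rpow_le_rpow_of_exponent_le hb1 hexp
  have hfin : Cα / ((t m:ℝ)+3) ^ ν ≤ c ^ (-r) / Cα * (Cα ^ 2 / ((m:ℝ)+3) ^ (2*ν₂)) := by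
    have h1 : Cα / ((t m : ℝ) + 3) ^ ν ≤ Cα / (c ^ r * ((m : ℝ) + 3) ^ ((1 - ν₂) * r)) :=
      div_le_div_of_nonneg_left hCα.le (by positivity) hmain
    have h2 : Cα / (c ^ r * ((m : ℝ) + 3) ^ ((1 - ν₂) * r))
        ≤ Cα / (c ^ r * ((m : ℝ) + 3) ^ (2*ν₂)) :=
      div_le_div_of_nonneg_left hCα.le (by positivity)
        (mul_le_mul_of_nonneg_left hmono (by positivity))
    have h3 : Cα / (c ^ r * ((m : ℝ) + 3) ^ (2*ν₂))
        = c ^ (-r) / Cα * (Cα ^ 2 / ((m:ℝ)+3) ^ (2*ν₂)) := by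
      rw [Real.rpow_neg hcpos.le]
      have hcr : (0:ℝ) < c ^ r := by positivity
      have hmr : (0:ℝ) < ((m:ℝ)+3) ^ (2*ν₂) := by positivity
      field_simp
    exact h1.trans (h2.trans h3.le)
  calc α s ≤ α (t m) := hαle
    _ = Cα / ((t m:ℝ)+3) ^ ν := hα (t m)
    _ ≤ _ := hfin
end

section
/- Almost-supermartingale convergence rate: Let {A_t}, {B_t}, {Z_t}, {α_t} be sequences of non-negative random variables adapted to a filtration {F_t}, and let ε ∈ (0,1). Assume (i) E[Z_{t+1} | F_t] ≤ (1+A_t)Z_t + B_t − α_t Z_t for all t; (ii) ∑A_t < ∞, ∑B_t < ∞, ∑α_t = ∞ a.s.; (iii) there is T ≥ 1 with α_t ≥ ε/t a.s. for all t ≥ T; (iv) ∑_{t≥1}(t+1)^ε B_t < ∞ and ∑_{t≥1}(α_t − ε/t) = ∞ a.s. Then t^ε Z_t → 0 almost surely. -/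
open MeasureTheory Filter Finset

lemma pathwise_final (z al P : ℕ → ℝ) (K L : ℝ)
    (hP1 : ∀ t, 1 ≤ P t) (hPK : ∀ t, P t ≤ K)
    (hz : ∀ t, 0 ≤ z t) (hal : ∀ t, 0 ≤ al t)
    (hY : Tendsto (fun t => z t * (P t)⁻¹) atTop (nhds L))
    (hD : ∃ M : ℝ, ∀ m, ∑ t ∈ Finset.range m, al t * z t * (P (t + 1))⁻¹ ≤ M)
    (hdiv : Tendsto (fun n => ∑ t ∈ Finset.range n, al t) atTop atTop) :
    Tendsto z atTop (nhds 0) := by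
  have hK1 : (1 : ℝ) ≤ K := (hP1 0).trans (hPK 0)
  have hK0 : (0 : ℝ) < K := by linarith
  have hPpos : ∀ t, (0:ℝ) < P t := fun t => lt_of_lt_of_le one_pos (hP1 t)
  have hY0 : ∀ t, 0 ≤ z t * (P t)⁻¹ := fun t =>
    mul_nonneg (hz t) (inv_nonneg.2 (hPpos t).le)
  have hL0 : 0 ≤ L := ge_of_tendsto' hY hY0
  have hL : L = 0 := by
    by_contra hne
    have hLpos : 0 < L := lt_of_le_of_ne hL0 (Ne.symm hne)
    obtain ⟨M, hM⟩ := hD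
    have hev : ∀ᶠ t in atTop, L / 2 ≤ z t * (P t)⁻¹ :=
      hY.eventually (eventually_ge_nhds (by linarith))
    obtain ⟨N, hN⟩ := hev.exists_forall_of_atTop
    -- for t ≥ N, z t ≥ L/2
    have hzb : ∀ t ≥ N, L / 2 ≤ z t := by
      intro t ht
      calc L / 2 ≤ z t * (P t)⁻¹ := hN t ht
        _ ≤ z t * 1 := by
            apply mul_le_mul_of_nonneg_left _ (hz t)
            exact inv_le_one_of_one_le₀ (hP1 t)
        _ = z t := mul_one _
    have hbdd : ∀ n, ∑ t ∈ Finset.range n, al t ≤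
        (∑ t ∈ Finset.range N, al t) + 2 * K / L * M := by
      intro n
      rcases le_total n N with h | h
      · have h1 : ∑ t ∈ Finset.range n, al t ≤ ∑ t ∈ Finset.range N, al t :=
          Finset.sum_le_sum_of_subset_of_nonneg (Finset.range_subset_range.2 h)
            (fun i _ _ => hal i)
      -- M ≥ 0
        have hM0 : 0 ≤ M := le_trans (by simp) (hM 0)
        have : 0 ≤ 2 * K / L * M := by positivity
        linarith
      · rw [← Finset.sum_range_add_sum_Ico _ h]
        have h2 : ∑ t ∈ Finset.Ico N n, al t ≤
            2 * K / L * ∑ t ∈ Finset.Ico N n, al t * z t * (P (t + 1))⁻¹ := by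
          rw [Finset.mul_sum]
          apply Finset.sum_le_sum
          intro i hi
          have hiN : N ≤ i := (Finset.mem_Ico.1 hi).1
          have hz2 : L / 2 ≤ z i := hzb i hiN
          have hPinv : K⁻¹ ≤ (P (i+1))⁻¹ := by
            apply inv_anti₀ (hPpos _) (hPK _)
          calc al i = 2 * K / L * (al i * (L/2) * K⁻¹) := by
                field_simp
            _ ≤ 2 * K / L * (al i * z i * (P (i+1))⁻¹) := by
                apply mul_le_mul_of_nonneg_left _ (by positivity)
                apply mul_le_mul
                · exact mul_le_mul_of_nonneg_left hz2 (hal i)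
                · exact hPinv
                · positivity
                · exact mul_nonneg (hal i) (hz i)
        have h3 : ∑ t ∈ Finset.Ico N n, al t * z t * (P (t + 1))⁻¹ ≤ M := by
          have := hM n
          rw [← Finset.sum_range_add_sum_Ico _ h] at this
          have h4 : 0 ≤ ∑ t ∈ Finset.range N, al t * z t * (P (t + 1))⁻¹ :=
            Finset.sum_nonneg fun i _ =>
            mul_nonneg (mul_nonneg (hal i) (hz i)) (inv_nonneg.2 (hPpos _).le)
          linarith
        have h5 : 2 * K / L * ∑ t ∈ Finset.Ico N n, al t * z t * (P (t + 1))⁻¹ ≤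
            2 * K / L * M := mul_le_mul_of_nonneg_left h3 (by positivity)
        linarith
    obtain ⟨n, hn⟩ := (hdiv.eventually
      (eventually_gt_atTop ((∑ t ∈ Finset.range N, al t) + 2 * K / L * M))).exists
    exact absurd (hbdd n) (not_le.2 hn)
  -- squeeze
  have hle : ∀ t, z t ≤ z t * (P t)⁻¹ * K := by
    intro t
    have h := mul_le_mul_of_nonneg_left (hPK t) (hY0 t)
    have h2 : z t * (P t)⁻¹ * P t = z t := by
      rw [mul_assoc, inv_mul_cancel₀ (hPpos t).ne', mul_one]
    calc z t = z t * (P t)⁻¹ * P t := h2.symm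
      _ ≤ z t * (P t)⁻¹ * K := by rw [mul_assoc, mul_assoc] at h ⊢; exact h
  have hlim : Tendsto (fun t => z t * (P t)⁻¹ * K) atTop (nhds 0) := by
    have := hY.mul_const K
    rwa [hL, zero_mul] at this
  exact squeeze_zero hz hle hlim
lemma rs0
    {Ω : Type*} {mΩ : MeasurableSpace Ω} (μ : Measure Ω) [IsProbabilityMeasure μ]
    (ℱ : Filtration ℕ mΩ)
    (A B Z α : ℕ → Ω → ℝ)
    (hA : Adapted ℱ A) (hB : Adapted ℱ B) (hZ : Adapted ℱ Z) (hα : Adapted ℱ α)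
    (hA0 : ∀ t, 0 ≤ᵐ[μ] A t) (hB0 : ∀ t, 0 ≤ᵐ[μ] B t)
    (hZ0 : ∀ t, 0 ≤ᵐ[μ] Z t) (hα0 : ∀ t, 0 ≤ᵐ[μ] α t)
    (hZint : ∀ t, Integrable (Z t) μ)
    (hrec : ∀ t, μ[Z (t + 1) | ℱ t] ≤ᵐ[μ]
      fun ω => (1 + A t ω) * Z t ω + B t ω - α t ω * Z t ω)
    (hAsum : ∀ᵐ ω ∂μ, Summable (fun t => A t ω))
    (hBsum : ∀ᵐ ω ∂μ, Summable (fun t => B t ω))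
    (hαdiv : ∀ᵐ ω ∂μ, Tendsto (fun n => ∑ t ∈ Finset.range n, α t ω) atTop atTop) :
    ∀ᵐ ω ∂μ, Tendsto (fun t => Z t ω) atTop (nhds 0) := by
  classical
  have hA : ∀ t, StronglyMeasurable[ℱ t] (A t) := fun t => (hA t).stronglyMeasurable
  have hB : ∀ t, StronglyMeasurable[ℱ t] (B t) := fun t => (hB t).stronglyMeasurable
  have hZ : ∀ t, StronglyMeasurable[ℱ t] (Z t) := fun t => (hZ t).stronglyMeasurable
  have hα : ∀ t, StronglyMeasurable[ℱ t] (α t) := fun t => (hα t).stronglyMeasurable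
  set P : ℕ → Ω → ℝ := fun t ω => ∏ s ∈ Finset.range t, (1 + A s ω) with hPdef
  set Y : ℕ → Ω → ℝ := fun t ω => Z t ω * (P t ω)⁻¹ with hYdef
  set D : ℕ → Ω → ℝ := fun t ω => α t ω * Z t ω * (P (t + 1) ω)⁻¹ with hDdef
  -- measurability of P
  have hPm : ∀ t u, u ≤ t + 1 → StronglyMeasurable[ℱ t] (P u) := by
    intro t u hu
    apply Finset.stronglyMeasurable_fun_prod
    intro s hs
    have : s ≤ t := by
      have := Finset.mem_range.1 hs; omega
    exact stronglyMeasurable_const.add ((hA s).mono (ℱ.mono this))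
  have hPmeas : ∀ u, StronglyMeasurable (P u) := fun u =>
    (hPm u u (by omega)).mono (ℱ.le u)
  have hPmi : ∀ t u, u ≤ t + 1 → StronglyMeasurable[ℱ t] (fun ω => (P u ω)⁻¹) :=
    fun t u hu => ((hPm t u hu).measurable.inv).stronglyMeasurable
  have hYm : ∀ t, StronglyMeasurable[ℱ t] (Y t) := fun t =>
    (hZ t).mul (hPmi t t (by omega))
  have hDm : ∀ t, StronglyMeasurable (D t) := fun t =>
    ((((hα t).mono (ℱ.le t)).mul ((hZ t).mono (ℱ.le t))).measurable.mul
      (hPmeas (t+1)).measurable.inv).stronglyMeasurable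
  -- pointwise a.e. good set
  have hgood : ∀ᵐ ω ∂μ, ∀ t, 0 ≤ A t ω ∧ 0 ≤ B t ω ∧ 0 ≤ Z t ω ∧ 0 ≤ α t ω ∧
      α t ω * Z t ω ≤ (1 + A t ω) * Z t ω + B t ω := by
    rw [ae_all_iff]
    intro t
    have h1 : 0 ≤ᵐ[μ] μ[Z (t + 1) | ℱ t] := condExp_nonneg (hZ0 (t + 1))
    filter_upwards [hA0 t, hB0 t, hZ0 t, hα0 t, hrec t, h1] with ω a b z al rec pos
    exact ⟨a, b, z, al, by simpa using pos.trans rec⟩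
  have hP1ae : ∀ᵐ ω ∂μ, ∀ t, 1 ≤ P t ω := by
    filter_upwards [hgood] with ω hg
    intro t
    show (1:ℝ) ≤ ∏ s ∈ Finset.range t, (1 + A s ω)
    have h := Finset.prod_le_prod (s := Finset.range t) (f := fun _ => (1:ℝ))
      (g := fun s => 1 + A s ω) (fun i _ => zero_le_one)
      (fun i _ => by show (1:ℝ) ≤ 1 + A i ω; linarith [(hg i).1])
    simpa using h
  have hPsucc : ∀ t ω, P (t + 1) ω = P t ω * (1 + A t ω) := fun t ω =>
    Finset.prod_range_succ _ _
  have hYint : ∀ t, Integrable (Y t) μ := by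
    intro t
    apply Integrable.mono' (hZint t).norm
      ((hYm t).mono (ℱ.le t)).aestronglyMeasurable
    filter_upwards [hP1ae] with ω h1
    have hp : 0 < P t ω := lt_of_lt_of_le one_pos (h1 t)
    rw [hYdef]
    simp only [norm_mul]
    apply mul_le_of_le_one_right (norm_nonneg _)
    rw [norm_inv, Real.norm_eq_abs, abs_of_pos hp]
    exact inv_le_one_of_one_le₀ (h1 t)
  have key : ∀ n : ℕ, ∀ᵐ ω ∂μ,
      ((∀ t, (∑ s ∈ Finset.range (t+1), A s ω) ≤ n ∧ (∑ s ∈ Finset.range (t+1), B s ω) ≤ n) →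
        (∃ c, Tendsto (fun t => Y t ω) atTop (nhds c)) ∧
        (∃ M : ℝ, ∀ m, ∑ s ∈ Finset.range m, D s ω ≤ M)) := by
    intro n
    set E : ℕ → Set Ω := fun t =>
      {ω | (∑ s ∈ Finset.range (t+1), A s ω) ≤ n ∧ (∑ s ∈ Finset.range (t+1), B s ω) ≤ n}
      with hEdef
    set χ : ℕ → Ω → ℝ := fun t => (E t).indicator (fun _ => (1:ℝ)) with hχdef
    set C : ℕ → Ω → ℝ := fun t ω => B t ω * (P (t + 1) ω)⁻¹ with hCdef
    set U : ℕ → Ω → ℝ := fun t ω => Y 0 ω + ∑ s ∈ Finset.range t,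
      χ s ω * (Y (s+1) ω - Y s ω + D s ω - C s ω) with hUdef
    have hEm : ∀ t, MeasurableSet[ℱ t] (E t) := by
      intro t
      have h1 : StronglyMeasurable[ℱ t] (fun ω => ∑ s ∈ Finset.range (t+1), A s ω) :=
        Finset.stronglyMeasurable_fun_sum _ fun s hs =>
          (hA s).mono (ℱ.mono (by have := Finset.mem_range.1 hs; omega))
      have h2 : StronglyMeasurable[ℱ t] (fun ω => ∑ s ∈ Finset.range (t+1), B s ω) :=
        Finset.stronglyMeasurable_fun_sum _ fun s hs =>
          (hB s).mono (ℱ.mono (by have := Finset.mem_range.1 hs; omega))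
      exact (h1.measurable measurableSet_Iic).inter (h2.measurable measurableSet_Iic)
    have hχm : ∀ t, StronglyMeasurable[ℱ t] (χ t) := fun t =>
      stronglyMeasurable_const.indicator (hEm t)
    have hχ0 : ∀ t ω, ω ∉ E t → χ t ω = 0 := fun t ω h => Set.indicator_of_notMem h _
    have hχ1 : ∀ t ω, ω ∈ E t → χ t ω = 1 := fun t ω h => Set.indicator_of_mem h _
    have hχnn : ∀ t ω, 0 ≤ χ t ω ∧ χ t ω ≤ 1 := by
      intro t ω
      by_cases h : ω ∈ E t
      · rw [hχ1 t ω h]; norm_num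
      · rw [hχ0 t ω h]; norm_num
    have hχmeas : ∀ t, StronglyMeasurable (χ t) := fun t => (hχm t).mono (ℱ.le t)
    have hCm : ∀ t, StronglyMeasurable (C t) := fun t =>
      (((hB t).mono (ℱ.le t)).measurable.mul
        (hPmeas (t+1)).measurable.inv).stronglyMeasurable
    have hEA : ∀ t ω, (∀ s, 0 ≤ A s ω) → ω ∈ E t → A t ω ≤ n := by
      intro t ω hnn h
      have hsingle : A t ω ≤ ∑ s ∈ Finset.range (t+1), A s ω :=
        Finset.single_le_sum (f := fun s => A s ω) (fun i _ => hnn i)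
          (Finset.self_mem_range_succ t)
      exact hsingle.trans h.1
    have hEB : ∀ t ω, (∀ s, 0 ≤ B s ω) → ω ∈ E t → B t ω ≤ n := by
      intro t ω hnn h
      have hsingle : B t ω ≤ ∑ s ∈ Finset.range (t+1), B s ω :=
        Finset.single_le_sum (f := fun s => B s ω) (fun i _ => hnn i)
          (Finset.self_mem_range_succ t)
      exact hsingle.trans h.2
    have hintY1 : ∀ t u, Integrable (fun ω => χ t ω * Y u ω) μ := by
      intro t u
      apply Integrable.mono' (hZint u).norm
        ((hχmeas t).mul ((hYm u).mono (ℱ.le u))).aestronglyMeasurable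
      filter_upwards [hP1ae] with ω h1
      have hp : 0 < P u ω := lt_of_lt_of_le one_pos (h1 u)
      simp only [Pi.mul_apply, norm_mul, hYdef]
      calc ‖χ t ω‖ * (‖Z u ω‖ * ‖(P u ω)⁻¹‖)
          ≤ 1 * (‖Z u ω‖ * 1) := by
            apply mul_le_mul
            · rw [Real.norm_eq_abs, abs_of_nonneg (hχnn t ω).1]; exact (hχnn t ω).2
            · apply mul_le_mul_of_nonneg_left _ (norm_nonneg _)
              rw [norm_inv, Real.norm_eq_abs, abs_of_pos hp]
              exact inv_le_one_of_one_le₀ (h1 u)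
            · positivity
            · norm_num
        _ = ‖Z u ω‖ := by ring
    have hintC : ∀ t, Integrable (fun ω => χ t ω * C t ω) μ := by
      intro t
      apply Integrable.mono' (integrable_const (n : ℝ))
        ((hχmeas t).mul (hCm t)).aestronglyMeasurable
      filter_upwards [hP1ae, hgood] with ω h1 hg
      simp only [Pi.mul_apply, Pi.add_apply]
      have hp : 0 < P (t+1) ω := lt_of_lt_of_le one_pos (h1 (t+1))
      by_cases hE : ω ∈ E t
      · rw [hχ1 t ω hE, one_mul, hCdef]
        have hC0 : 0 ≤ B t ω * (P (t+1) ω)⁻¹ := mul_nonneg (hg t).2.1 (by positivity)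
        rw [Real.norm_eq_abs, abs_of_nonneg hC0]
        calc B t ω * (P (t+1) ω)⁻¹ ≤ B t ω * 1 :=
              mul_le_mul_of_nonneg_left (inv_le_one_of_one_le₀ (h1 (t+1))) (hg t).2.1
          _ = B t ω := mul_one _
          _ ≤ n := hEB t ω (fun s => (hg s).2.1) hE
      · rw [hχ0 t ω hE, zero_mul, norm_zero]
        exact_mod_cast Nat.cast_nonneg (α := ℝ) n
    have hintD : ∀ t, Integrable (fun ω => χ t ω * D t ω) μ := by
      intro t
      apply Integrable.mono' (((hZint t).const_mul (1 + n)).add (integrable_const (n : ℝ)))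
        ((hχmeas t).mul (hDm t)).aestronglyMeasurable
      filter_upwards [hP1ae, hgood] with ω h1 hg
      simp only [Pi.mul_apply, Pi.add_apply]
      have hp : 0 < P (t+1) ω := lt_of_lt_of_le one_pos (h1 (t+1))
      have hZnn : 0 ≤ Z t ω := (hg t).2.2.1
      have hrhs : 0 ≤ (1 + (n:ℝ)) * Z t ω + n := by positivity
      by_cases hE : ω ∈ E t
      · rw [hχ1 t ω hE, one_mul, hDdef]
        have hD0 : 0 ≤ α t ω * Z t ω * (P (t+1) ω)⁻¹ :=
          mul_nonneg (mul_nonneg (hg t).2.2.2.1 hZnn) (by positivity)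
        rw [Real.norm_eq_abs, abs_of_nonneg hD0]
        have h2 : α t ω * Z t ω * (P (t+1) ω)⁻¹ ≤ α t ω * Z t ω := by
          calc α t ω * Z t ω * (P (t+1) ω)⁻¹ ≤ α t ω * Z t ω * 1 :=
                mul_le_mul_of_nonneg_left (inv_le_one_of_one_le₀ (h1 (t+1)))
                  (mul_nonneg (hg t).2.2.2.1 hZnn)
            _ = α t ω * Z t ω := mul_one _
        have h3 : α t ω * Z t ω ≤ (1 + A t ω) * Z t ω + B t ω := (hg t).2.2.2.2
        have h4 : A t ω ≤ n := hEA t ω (fun s => (hg s).1) hE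
        have h5 : B t ω ≤ n := hEB t ω (fun s => (hg s).2.1) hE
        have h6 : (1 + A t ω) * Z t ω ≤ (1 + (n:ℝ)) * Z t ω :=
          mul_le_mul_of_nonneg_right (by linarith) hZnn
        linarith
      · rw [hχ0 t ω hE, zero_mul, norm_zero]
        exact hrhs
    have hincint : ∀ t,
        Integrable (fun ω => χ t ω * (Y (t+1) ω - Y t ω + D t ω - C t ω)) μ := by
      intro t
      have : (fun ω => χ t ω * (Y (t+1) ω - Y t ω + D t ω - C t ω)) =
          fun ω => ((χ t ω * Y (t+1) ω - χ t ω * Y t ω) + χ t ω * D t ω) - χ t ω * C t ω := by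
        funext ω; ring
      rw [this]
      exact ((((hintY1 t (t+1)).sub (hintY1 t t)).add (hintD t)).sub (hintC t))
    have hUint : ∀ t, Integrable (U t) μ := by
      intro t
      rw [hUdef]
      have hY0' : Integrable (Y 0) μ := hYint 0
      exact hY0'.add (integrable_finset_sum _ (fun s _ => hincint s))
    have hstep : ∀ t, μ[(fun ω => χ t ω * Y (t+1) ω) | ℱ t] ≤ᵐ[μ]
        fun ω => χ t ω * (Y t ω + C t ω - D t ω) := by
      intro t
      have hfm : StronglyMeasurable[ℱ t] (fun ω => χ t ω * (P (t+1) ω)⁻¹) :=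
        (hχm t).mul (hPmi t (t+1) le_rfl)
      have hbound : ∀ᵐ ω ∂μ, ‖χ t ω * (P (t+1) ω)⁻¹‖ ≤ 1 := by
        filter_upwards [hP1ae] with ω h1
        have hp : 0 < P (t+1) ω := lt_of_lt_of_le one_pos (h1 (t+1))
        rw [norm_mul, Real.norm_eq_abs, Real.norm_eq_abs, abs_of_nonneg (hχnn t ω).1,
          abs_of_pos (inv_pos.2 hp)]
        calc χ t ω * (P (t+1) ω)⁻¹ ≤ 1 * 1 :=
              mul_le_mul (hχnn t ω).2 (inv_le_one_of_one_le₀ (h1 (t+1))) (by positivity)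
                zero_le_one
          _ = 1 := by norm_num
      have hpull := condExp_stronglyMeasurable_mul_of_bound (ℱ.le t) hfm (hZint (t+1)) 1 hbound
      have hre : (fun ω => χ t ω * Y (t+1) ω) =
          (fun ω => χ t ω * (P (t+1) ω)⁻¹) * Z (t+1) := by
        funext ω; simp only [Pi.mul_apply, hYdef]; ring
      rw [hre]
      refine hpull.trans_le ?_
      filter_upwards [hrec t, hgood, hP1ae] with ω hr hg h1
      simp only [Pi.mul_apply]
      have hp : 0 < P t ω := lt_of_lt_of_le one_pos (h1 t)
      have ha : 0 < 1 + A t ω := by linarith [(hg t).1]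
      have hp1 : P (t+1) ω = P t ω * (1 + A t ω) := hPsucc t ω
      have hnn : 0 ≤ χ t ω * (P (t+1) ω)⁻¹ :=
        mul_nonneg (hχnn t ω).1 (by rw [hp1]; positivity)
      have h2 : χ t ω * (P (t+1) ω)⁻¹ * ((μ[Z (t+1) | ℱ t]) ω) ≤
          χ t ω * (P (t+1) ω)⁻¹ * ((1 + A t ω) * Z t ω + B t ω - α t ω * Z t ω) :=
        mul_le_mul_of_nonneg_left hr hnn
      refine h2.trans (le_of_eq ?_)
      rw [hYdef, hCdef, hDdef]
      simp only [hp1]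
      field_simp
    have hUm : ∀ t, StronglyMeasurable[ℱ t] (U t) := by
      intro t
      rw [hUdef]
      apply ((hYm 0).mono (ℱ.mono (Nat.zero_le t))).add
      apply Finset.stronglyMeasurable_fun_sum
      intro s hs
      have hs' : s < t := Finset.mem_range.1 hs
      have hχs : StronglyMeasurable[ℱ t] (χ s) := (hχm s).mono (ℱ.mono hs'.le)
      have hY1 : StronglyMeasurable[ℱ t] (Y (s+1)) := (hYm (s+1)).mono (ℱ.mono (by omega))
      have hYs : StronglyMeasurable[ℱ t] (Y s) := (hYm s).mono (ℱ.mono hs'.le)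
      have hPi : StronglyMeasurable[ℱ t] (fun ω => (P (s+1) ω)⁻¹) := hPmi t (s+1) (by omega)
      have hDs : StronglyMeasurable[ℱ t] (D s) :=
        (((hα s).mono (ℱ.mono hs'.le)).mul ((hZ s).mono (ℱ.mono hs'.le))).mul hPi
      have hCs : StronglyMeasurable[ℱ t] (C s) := ((hB s).mono (ℱ.mono hs'.le)).mul hPi
      exact hχs.mul (((hY1.sub hYs).add hDs).sub hCs)
    have hcond : ∀ t, μ[U (t+1) | ℱ t] ≤ᵐ[μ] U t := by
      intro t
      have hsplit : U (t+1) = (fun ω => U t ω + χ t ω * (D t ω - C t ω - Y t ω)) +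
          (fun ω => χ t ω * Y (t+1) ω) := by
        funext ω
        simp only [hUdef, Pi.add_apply, Finset.sum_range_succ]
        ring
      have hgint : Integrable (fun ω => U t ω + χ t ω * (D t ω - C t ω - Y t ω)) μ := by
        have heq : (fun ω => U t ω + χ t ω * (D t ω - C t ω - Y t ω)) =
            fun ω => U t ω + (χ t ω * D t ω - χ t ω * C t ω - χ t ω * Y t ω) := by
          funext ω; ring
        rw [heq]
        exact (hUint t).add (((hintD t).sub (hintC t)).sub (hintY1 t t))
      have hgm : StronglyMeasurable[ℱ t]
          (fun ω => U t ω + χ t ω * (D t ω - C t ω - Y t ω)) := by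
        have hPi : StronglyMeasurable[ℱ t] (fun ω => (P (t+1) ω)⁻¹) := hPmi t (t+1) le_rfl
        have hDs : StronglyMeasurable[ℱ t] (D t) := ((hα t).mul (hZ t)).mul hPi
        have hCs : StronglyMeasurable[ℱ t] (C t) := (hB t).mul hPi
        exact (hUm t).add ((hχm t).mul ((hDs.sub hCs).sub (hYm t)))
      have hgeq : μ[(fun ω => U t ω + χ t ω * (D t ω - C t ω - Y t ω)) | ℱ t] =
          fun ω => U t ω + χ t ω * (D t ω - C t ω - Y t ω) :=
        condExp_of_stronglyMeasurable (ℱ.le t) hgm hgint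
      rw [hsplit]
      have hcadd := condExp_add (μ := μ) (m := ℱ t) hgint (hintY1 t (t+1))
      filter_upwards [hcadd, hstep t] with ω hadd hstp
      rw [hadd]
      simp only [Pi.add_apply, hgeq]
      have hzero : χ t ω * (D t ω - C t ω - Y t ω) + χ t ω * (Y t ω + C t ω - D t ω) = 0 := by
        ring
      have := hstp
      linarith
    have hsub : Submartingale (fun t => -(U t)) ℱ μ := by
      apply submartingale_nat (fun t => (hUm t).neg) (fun t => (hUint t).neg)
      intro t
      have hneg := condExp_neg (μ := μ) (m := ℱ t) (U (t+1))
      filter_upwards [hneg, hcond t] with ω hn hc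
      simp only [Pi.neg_apply]
      rw [hn]
      simp only [Pi.neg_apply]
      linarith
    have hEU : ∀ t, ∫ ω, U t ω ∂μ ≤ ∫ ω, U 0 ω ∂μ := by
      intro t
      induction t with
      | zero => exact le_rfl
      | succ t ih =>
        have h1 : ∫ ω, U (t+1) ω ∂μ = ∫ ω, (μ[U (t+1) | ℱ t]) ω ∂μ :=
          (integral_condExp (μ := μ) (f := U (t+1)) (ℱ.le t)).symm
        rw [h1]
        exact (integral_mono_ae integrable_condExp (hUint t) (hcond t)).trans ih
    set Y' : ℕ → Ω → ℝ := fun t ω => Y 0 ω + ∑ s ∈ Finset.range t,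
      χ s ω * (Y (s+1) ω - Y s ω) with hY'def
    set S : ℕ → Ω → ℝ := fun t ω => ∑ s ∈ Finset.range t, χ s ω * D s ω with hSdef
    set Cp : ℕ → Ω → ℝ := fun t ω => ∑ s ∈ Finset.range t, χ s ω * C s ω with hCpdef
    have hUsplit : ∀ t ω, U t ω = Y' t ω + S t ω - Cp t ω := by
      intro t ω
      rw [hUdef, hY'def, hSdef, hCpdef]
      simp only []
      have : ∑ s ∈ Finset.range t, χ s ω * (Y (s+1) ω - Y s ω + D s ω - C s ω) =
          ∑ s ∈ Finset.range t, (χ s ω * (Y (s+1) ω - Y s ω) + χ s ω * D s ω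
            - χ s ω * C s ω) := Finset.sum_congr rfl fun s _ => by ring
      rw [this, Finset.sum_sub_distrib, Finset.sum_add_distrib]
      ring
    have hstruct : ∀ᵐ ω ∂μ, ∀ t, 0 ≤ Y' t ω ∧ Cp t ω ≤ n ∧ 0 ≤ S t ω ∧
        S t ω ≤ S (t+1) ω ∧ Cp t ω ≤ Cp (t+1) ω ∧ ((∀ u, ω ∈ E u) → (Y' t ω = Y t ω ∧
          S t ω = ∑ s ∈ Finset.range t, D s ω)) := by
      filter_upwards [hgood, hP1ae] with ω hg h1
      have hPpos : ∀ u, 0 < P u ω := fun u => lt_of_lt_of_le one_pos (h1 u)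
      have hYnn : ∀ u, 0 ≤ Y u ω := fun u =>
        mul_nonneg (hg u).2.2.1 (inv_nonneg.2 (hPpos u).le)
      have hDnn : ∀ u, 0 ≤ D u ω := fun u =>
        mul_nonneg (mul_nonneg (hg u).2.2.2.1 (hg u).2.2.1) (inv_nonneg.2 (hPpos (u+1)).le)
      have hCnn : ∀ u, 0 ≤ C u ω := fun u =>
        mul_nonneg (hg u).2.1 (inv_nonneg.2 (hPpos (u+1)).le)
      have hEdec : ∀ s t, s ≤ t → ω ∈ E t → ω ∈ E s := by
        intro s t hst hE
        constructor
        · refine le_trans ?_ hE.1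
          exact Finset.sum_le_sum_of_subset_of_nonneg
            (Finset.range_subset_range.2 (by omega)) (fun i _ _ => (hg i).1)
        · refine le_trans ?_ hE.2
          exact Finset.sum_le_sum_of_subset_of_nonneg
            (Finset.range_subset_range.2 (by omega)) (fun i _ _ => (hg i).2.1)
      have hY'str : ∀ t, (∃ m, Y' t ω = Y m ω) ∧ (ω ∈ E t → Y' t ω = Y t ω) := by
        intro t
        induction t with
        | zero => exact ⟨⟨0, by simp [hY'def]⟩, fun _ => by simp [hY'def]⟩
        | succ t ih =>
          by_cases hE : ω ∈ E t
          · have hprev : Y' t ω = Y t ω := ih.2 hE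
            have heq : Y' (t+1) ω = Y (t+1) ω := by
              rw [hY'def] at hprev ⊢
              simp only [Finset.sum_range_succ, hχ1 t ω hE] at *
              linarith
            exact ⟨⟨t+1, heq⟩, fun _ => heq⟩
          · have hz0 : χ t ω = 0 := hχ0 t ω hE
            have heq : Y' (t+1) ω = Y' t ω := by
              rw [hY'def]
              simp only [Finset.sum_range_succ, hz0]
              ring
            refine ⟨?_, ?_⟩
            · obtain ⟨m, hm⟩ := ih.1; exact ⟨m, heq.trans hm⟩
            · intro hE1; exact absurd (hEdec t (t+1) (by omega) hE1) hE
      have hCp : ∀ t, Cp t ω ≤ n := by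
        intro t
        induction t with
        | zero => simp [hCpdef]
        | succ t ih =>
          by_cases hE : ω ∈ E t
          · have hle : Cp (t+1) ω ≤ ∑ s ∈ Finset.range (t+1), B s ω := by
              rw [hCpdef]
              apply Finset.sum_le_sum
              intro s _
              calc χ s ω * C s ω ≤ 1 * C s ω :=
                    mul_le_mul_of_nonneg_right (hχnn s ω).2 (hCnn s)
                _ = C s ω := one_mul _
                _ ≤ B s ω * 1 := by
                    rw [hCdef]
                    exact mul_le_mul_of_nonneg_left
                      (inv_le_one_of_one_le₀ (h1 (s+1))) (hg s).2.1
                _ = B s ω := mul_one _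
            exact hle.trans hE.2
          · have : Cp (t+1) ω = Cp t ω := by
              rw [hCpdef]
              simp only [Finset.sum_range_succ, hχ0 t ω hE]
              ring
            rw [this]; exact ih
      intro t
      refine ⟨?_, hCp t, ?_, ?_, ?_, ?_⟩
      · obtain ⟨m, hm⟩ := (hY'str t).1
        rw [hm]; exact hYnn m
      · rw [hSdef]
        exact Finset.sum_nonneg fun s _ => mul_nonneg (hχnn s ω).1 (hDnn s)
      · rw [hSdef]
        simp only [Finset.sum_range_succ]
        have := mul_nonneg (hχnn t ω).1 (hDnn t)
        linarith
      · rw [hCpdef]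
        simp only [Finset.sum_range_succ]
        have := mul_nonneg (hχnn t ω).1 (hCnn t)
        linarith
      · intro hEall
        constructor
        · exact (hY'str t).2 (hEall t)
        · rw [hSdef]
          exact Finset.sum_congr rfl fun s _ => by rw [hχ1 s ω (hEall s), one_mul]
    -- L1 bound and convergence of U
    have hUlb : ∀ᵐ ω ∂μ, ∀ t, -(n:ℝ) ≤ U t ω ∧ S t ω ≤ U t ω + n := by
      filter_upwards [hstruct] with ω hs
      intro t
      have h := hUsplit t ω
      constructor <;> [skip; skip] <;>
        · have h1 := (hs t).1
          have h2 := (hs t).2.1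
          have h3 := (hs t).2.2.1
          linarith
    have hintS : ∀ t, Integrable (S t) μ := fun t => by
      rw [hSdef]; exact integrable_finset_sum _ fun s _ => hintD s
    have hUbd : ∀ t, eLpNorm (-(U t)) 1 μ ≤
        ENNReal.ofReal ((∫ ω, U 0 ω ∂μ) + 2*n) := by
      intro t
      rw [eLpNorm_neg, eLpNorm_one_eq_lintegral_enorm,
        ← ofReal_integral_norm_eq_lintegral_enorm (hUint t)]
      apply ENNReal.ofReal_le_ofReal
      have hub : ∀ᵐ ω ∂μ, ‖U t ω‖ ≤ U t ω + 2*n := by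
        filter_upwards [hUlb] with ω hlb
        rw [Real.norm_eq_abs]
        refine abs_le.2 ⟨?_, ?_⟩ <;> [linarith [(hlb t).1]; linarith [(hlb t).1]]
      calc ∫ ω, ‖U t ω‖ ∂μ ≤ ∫ ω, (U t ω + 2*n) ∂μ :=
            integral_mono_ae (hUint t).norm ((hUint t).add (integrable_const _)) hub
        _ = (∫ ω, U t ω ∂μ) + 2*n := by
            rw [integral_add (hUint t) (integrable_const _)]
            simp [measure_univ]
        _ ≤ (∫ ω, U 0 ω ∂μ) + 2*n := by linarith [hEU t]
    have hconvU : ∀ᵐ ω ∂μ, ∃ c, Tendsto (fun t => U t ω) atTop (nhds c) := by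
      have h := hsub.exists_ae_tendsto_of_bdd
        (R := ((∫ ω, U 0 ω ∂μ) + 2*n).toNNReal) (fun t => hUbd t)
      filter_upwards [h] with ω ⟨c, hc⟩
      refine ⟨-c, ?_⟩
      have := hc.neg
      simp only [Pi.neg_apply, neg_neg] at this
      exact this
    -- S converges a.e.
    have hSbd : ∀ t, ∫ ω, S t ω ∂μ ≤ (∫ ω, U 0 ω ∂μ) + n := by
      intro t
      have h := integral_mono_ae (hintS t) ((hUint t).add (integrable_const (n:ℝ)))
        (by filter_upwards [hUlb] with ω hlb; exact (hlb t).2)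
      simp only [Pi.add_apply] at h
      rw [integral_add (hUint t) (integrable_const _)] at h
      simp [measure_univ] at h
      linarith [hEU t, h]
    have hSmeas : ∀ t, StronglyMeasurable (S t) := fun t => by
      rw [hSdef]
      exact Finset.stronglyMeasurable_fun_sum _ fun s _ => (hχmeas s).mul (hDm s)
    have hSnn : ∀ᵐ ω ∂μ, ∀ t, 0 ≤ S t ω := by
      filter_upwards [hstruct] with ω hs t
      exact (hs t).2.2.1
    have hfatou : ∫⁻ ω, liminf (fun t => ENNReal.ofReal (S t ω)) atTop ∂μ ≠ ⊤ := by
      have hcalc : ∫⁻ ω, liminf (fun t => ENNReal.ofReal (S t ω)) atTop ∂μ ≤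
          ENNReal.ofReal ((∫ ω, U 0 ω ∂μ) + n) := by
        calc ∫⁻ ω, liminf (fun t => ENNReal.ofReal (S t ω)) atTop ∂μ
            ≤ liminf (fun t => ∫⁻ ω, ENNReal.ofReal (S t ω) ∂μ) atTop :=
              lintegral_liminf_le fun t => (hSmeas t).measurable.ennreal_ofReal
          _ ≤ liminf (fun _ : ℕ => ENNReal.ofReal ((∫ ω, U 0 ω ∂μ) + n)) atTop := by
              have hev : ∀ t : ℕ, ∫⁻ ω, ENNReal.ofReal (S t ω) ∂μ ≤
                  ENNReal.ofReal ((∫ ω, U 0 ω ∂μ) + n) := by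
                intro t
                rw [← ofReal_integral_eq_lintegral_ofReal (hintS t) (by
                  filter_upwards [hSnn] with ω h; exact h t)]
                exact ENNReal.ofReal_le_ofReal (hSbd t)
              exact Filter.liminf_le_liminf (Eventually.of_forall hev)
          _ = ENNReal.ofReal ((∫ ω, U 0 ω ∂μ) + n) := liminf_const _
      exact ne_top_of_le_ne_top ENNReal.ofReal_ne_top hcalc
    have hSfin : ∀ᵐ ω ∂μ, liminf (fun t => ENNReal.ofReal (S t ω)) atTop < ⊤ :=
      ae_lt_top (Measurable.liminf fun t => (hSmeas t).measurable.ennreal_ofReal) hfatou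
    filter_upwards [hconvU, hSfin, hstruct] with ω hU hSf hst
    intro hEall
    have hEmem : ∀ t, ω ∈ E t := fun t => hEall t
    have hSmono : Monotone (fun t => S t ω) :=
      monotone_nat_of_le_succ fun t => (hst t).2.2.2.1
    have hSconv : ∃ l, Tendsto (fun t => S t ω) atTop (nhds l) := by
      rcases tendsto_of_monotone hSmono with h | h
      · exfalso
        have h2 : Tendsto (fun t => ENNReal.ofReal (S t ω)) atTop (nhds ⊤) :=
          ENNReal.tendsto_ofReal_atTop.comp h
        rw [h2.liminf_eq] at hSf
        exact lt_irrefl _ hSf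
      · exact h
    obtain ⟨lS, hlS⟩ := hSconv
    have hSle : ∀ m, S m ω ≤ lS := fun m => hSmono.ge_of_tendsto hlS m
    have hCpmono : Monotone (fun t => Cp t ω) :=
      monotone_nat_of_le_succ fun t => (hst t).2.2.2.2.1
    have hCpconv : ∃ l, Tendsto (fun t => Cp t ω) atTop (nhds l) := by
      rcases tendsto_of_monotone hCpmono with h | h
      · exfalso
        obtain ⟨m, hm⟩ := (h.eventually (eventually_gt_atTop (n:ℝ))).exists
        exact absurd (hst m).2.1 (not_le.2 hm)
      · exact h
    obtain ⟨lC, hlC⟩ := hCpconv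
    obtain ⟨cU, hcU⟩ := hU
    have hYeq : ∀ t, Y t ω = U t ω - S t ω + Cp t ω := by
      intro t
      have hus := hUsplit t ω
      have h2 := ((hst t).2.2.2.2.2 hEmem).1
      linarith
    constructor
    · refine ⟨cU - lS + lC, ?_⟩
      exact ((hcU.sub hlS).add hlC).congr (fun t => (hYeq t).symm)
    · refine ⟨lS, fun m => ?_⟩
      rw [← ((hst m).2.2.2.2.2 hEmem).2]
      exact hSle m
  filter_upwards [ae_all_iff.2 key, hgood, hP1ae, hAsum, hBsum, hαdiv] with ω
    hkey hg h1 hsA hsB hdv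
  set m := ⌈max (∑' t, A t ω) (∑' t, B t ω)⌉₊ with hmdef
  have hEall : ∀ t, (∑ s ∈ Finset.range (t+1), A s ω) ≤ (m:ℝ) ∧
      (∑ s ∈ Finset.range (t+1), B s ω) ≤ (m:ℝ) := by
    intro t
    constructor
    · calc ∑ s ∈ Finset.range (t+1), A s ω ≤ ∑' s, A s ω :=
          Summable.sum_le_tsum _ (fun i _ => (hg i).1) hsA
        _ ≤ max (∑' t, A t ω) (∑' t, B t ω) := le_max_left _ _
        _ ≤ m := Nat.le_ceil _
    · calc ∑ s ∈ Finset.range (t+1), B s ω ≤ ∑' s, B s ω :=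
          Summable.sum_le_tsum _ (fun i _ => (hg i).2.1) hsB
        _ ≤ max (∑' t, A t ω) (∑' t, B t ω) := le_max_right _ _
        _ ≤ m := Nat.le_ceil _
  obtain ⟨⟨c, hc⟩, ⟨M, hM⟩⟩ := hkey m hEall
  have hPK : ∀ t, P t ω ≤ Real.exp (∑' s, A s ω) := by
    intro t
    have hstep1 : P t ω ≤ ∏ s ∈ Finset.range t, Real.exp (A s ω) := by
      rw [hPdef]
      exact Finset.prod_le_prod (fun i _ => by linarith [(hg i).1])
        (fun i _ => by linarith [Real.add_one_le_exp (A i ω)])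
    calc P t ω ≤ ∏ s ∈ Finset.range t, Real.exp (A s ω) := hstep1
      _ = Real.exp (∑ s ∈ Finset.range t, A s ω) := (Real.exp_sum _ _).symm
      _ ≤ Real.exp (∑' s, A s ω) :=
          Real.exp_le_exp.2 (Summable.sum_le_tsum _ (fun i _ => (hg i).1) hsA)
  exact pathwise_final (fun t => Z t ω) (fun t => α t ω) (fun t => P t ω)
    (Real.exp (∑' s, A s ω)) c (fun t => h1 t) hPK (fun t => (hg t).2.2.1)
    (fun t => (hg t).2.2.2.1) hc ⟨M, hM⟩ hdv
lemma rate_ineq {ε : ℝ} (hε0 : 0 < ε) (hε1 : ε < 1) {t : ℕ} (ht : 1 ≤ t)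
    {a b z al : ℝ} (ha : 0 ≤ a) (hb : 0 ≤ b) (hz : 0 ≤ z) (hal : ε / t ≤ al) :
    ((t:ℝ)+1) ^ ε * ((1 + a) * z + b - al * z) ≤
      (1 + 2*a) * ((t:ℝ)^ε * z) + ((t:ℝ)+1)^ε * b - (al - ε/t) * ((t:ℝ)^ε * z) := by
  have htR : (1:ℝ) ≤ (t:ℝ) := by exact_mod_cast ht
  have htpos : (0:ℝ) < t := by linarith
  have hp : (0:ℝ) < (t:ℝ)^ε := Real.rpow_pos_of_pos htpos ε
  have hq : (t:ℝ)^ε ≤ ((t:ℝ)+1)^ε := Real.rpow_le_rpow htpos.le (by linarith) hε0.le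
  have hετ : 0 ≤ ε / t := by positivity
  have hqle : ((t:ℝ)+1)^ε ≤ (t:ℝ)^ε * (1 + ε / t) := by
    have h1 : ((t:ℝ)+1) = (t:ℝ) * (1 + 1/t) := by field_simp
    rw [h1, Real.mul_rpow htpos.le (by positivity)]
    apply mul_le_mul_of_nonneg_left _ hp.le
    have h2 := rpow_one_add_le_one_add_mul_self (s := 1/(t:ℝ))
      (le_trans (by norm_num : (-1:ℝ) ≤ 0) (by positivity)) hε0.le hε1.le
    calc (1 + 1/(t:ℝ))^ε ≤ 1 + ε * (1/t) := h2
      _ = 1 + ε / t := by ring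
  have hεt : ε / t ≤ 1 := by
    rw [div_le_one htpos]; linarith
  have hal0 : 0 ≤ al := le_trans hετ hal
  have key : ((t:ℝ)+1)^ε * (1 + a - al) ≤ (t:ℝ)^ε * (1 + 2*a - al + ε/t) := by
    rcases le_or_gt 0 (1 + a - al) with hc | hc
    · have hXY : (1 + ε/t) * (1 + a - al) ≤ 1 + 2*a - al + ε/t := by
        have h2 : (ε/t) * a ≤ a := mul_le_of_le_one_left ha hεt
        have h3 : 0 ≤ (ε/t) * al := mul_nonneg hετ hal0
        nlinarith
      calc ((t:ℝ)+1)^ε * (1 + a - al) ≤ (t:ℝ)^ε * (1 + ε/t) * (1 + a - al) :=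
            mul_le_mul_of_nonneg_right hqle hc
        _ = (t:ℝ)^ε * ((1 + ε/t) * (1 + a - al)) := by ring
        _ ≤ (t:ℝ)^ε * (1 + 2*a - al + ε/t) := mul_le_mul_of_nonneg_left hXY hp.le
    · have h4 : ((t:ℝ)+1)^ε * (1 + a - al) ≤ (t:ℝ)^ε * (1 + a - al) :=
        mul_le_mul_of_nonpos_right hq hc.le
      have h5 : (t:ℝ)^ε * (1 + a - al) ≤ (t:ℝ)^ε * (1 + 2*a - al + ε/t) :=
        mul_le_mul_of_nonneg_left (by linarith) hp.le
      linarith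
  have hkeyz := mul_le_mul_of_nonneg_right key hz
  nlinarith [hkeyz]

theorem almost_supermartingale_rate
    {Ω : Type*} {mΩ : MeasurableSpace Ω} (μ : Measure Ω) [IsProbabilityMeasure μ]
    (ℱ : Filtration ℕ mΩ)
    (A B Z α : ℕ → Ω → ℝ) (ε : ℝ) (hε : ε ∈ Set.Ioo (0:ℝ) 1)
    (hA : Adapted ℱ A) (hB : Adapted ℱ B) (hZ : Adapted ℱ Z) (hα : Adapted ℱ α)
    (hA0 : ∀ t, 0 ≤ᵐ[μ] A t) (hB0 : ∀ t, 0 ≤ᵐ[μ] B t)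
    (hZ0 : ∀ t, 0 ≤ᵐ[μ] Z t) (hα0 : ∀ t, 0 ≤ᵐ[μ] α t)
    (hZint : ∀ t, Integrable (Z t) μ)
    (hrec : ∀ t, μ[Z (t + 1) | ℱ t] ≤ᵐ[μ]
      fun ω => (1 + A t ω) * Z t ω + B t ω - α t ω * Z t ω)
    (hAsum : ∀ᵐ ω ∂μ, Summable (fun t => A t ω))
    (hBsum : ∀ᵐ ω ∂μ, Summable (fun t => B t ω))
    (hαdiv : ∀ᵐ ω ∂μ, Tendsto (fun n => ∑ t ∈ Finset.range n, α t ω) atTop atTop)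
    (hαlb : ∃ T : ℕ, 1 ≤ T ∧ ∀ᵐ ω ∂μ, ∀ t ≥ T, ε / (t : ℝ) ≤ α t ω)
    (hBsum' : ∀ᵐ ω ∂μ, Summable (fun t : ℕ => ((t : ℝ) + 1) ^ ε * B t ω))
    (hαdiv' : ∀ᵐ ω ∂μ,
      Tendsto (fun n => ∑ t ∈ Finset.Ico 1 n, (α t ω - ε / (t : ℝ))) atTop atTop) :
    ∀ᵐ ω ∂μ, Tendsto (fun t : ℕ => (t : ℝ) ^ ε * Z t ω) atTop (nhds 0) := by
  classical
  obtain ⟨hε0, hε1⟩ := hε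
  obtain ⟨T, hT1, hTa⟩ := hαlb
  set W : ℕ → Ω → ℝ := fun t ω => (t : ℝ) ^ ε * Z t ω with hWdef
  set A' : ℕ → Ω → ℝ := fun t ω => 2 * A t ω with hA'def
  set B' : ℕ → Ω → ℝ := fun t ω =>
    if t < T then ((t:ℝ)+1) ^ ε * ((1 + A t ω) * Z t ω + B t ω)
    else ((t:ℝ)+1) ^ ε * B t ω with hB'def
  set α' : ℕ → Ω → ℝ := fun t ω => if t < T then 0 else α t ω - ε / t with hα'def
  have hadW : Adapted ℱ W := fun t => (hZ t).const_mul _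
  have hadA' : Adapted ℱ A' := fun t => (hA t).const_mul _
  have hadB' : Adapted ℱ B' := by
    intro t
    rw [hB'def]
    by_cases h : t < T
    · simp only [if_pos h]
      exact (((measurable_const.add (hA t)).mul (hZ t)).add (hB t)).const_mul _
    · simp only [if_neg h]
      exact (hB t).const_mul _
  have hadα' : Adapted ℱ α' := by
    intro t
    rw [hα'def]
    by_cases h : t < T
    · simp only [if_pos h]; exact measurable_const
    · simp only [if_neg h]; exact (hα t).sub measurable_const
  have hW0 : ∀ t, 0 ≤ᵐ[μ] W t := by
    intro t
    filter_upwards [hZ0 t] with ω h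
    simp only [Pi.zero_apply] at h
    simp only [Pi.zero_apply]
    exact mul_nonneg (Real.rpow_nonneg (Nat.cast_nonneg t) ε) h
  have hA'0 : ∀ t, 0 ≤ᵐ[μ] A' t := by
    intro t
    filter_upwards [hA0 t] with ω h
    simp only [Pi.zero_apply] at h
    simp only [hA'def, Pi.zero_apply]
    linarith
  have hB'0 : ∀ t, 0 ≤ᵐ[μ] B' t := by
    intro t
    filter_upwards [hA0 t, hB0 t, hZ0 t] with ω ha hb hz
    simp only [Pi.zero_apply] at ha hb hz
    simp only [hB'def, Pi.zero_apply]
    have hq0 : (0:ℝ) ≤ ((t:ℝ)+1)^ε := Real.rpow_nonneg (by positivity) ε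
    by_cases h : t < T
    · simp only [if_pos h]
      apply mul_nonneg hq0
      have : 0 ≤ (1 + A t ω) * Z t ω := mul_nonneg (by linarith) hz
      linarith
    · simp only [if_neg h]
      exact mul_nonneg hq0 hb
  have hα'0 : ∀ t, 0 ≤ᵐ[μ] α' t := by
    intro t
    filter_upwards [hTa] with ω h
    simp only [hα'def, Pi.zero_apply]
    by_cases hlt : t < T
    · simp only [if_pos hlt]; exact le_refl 0
    · simp only [if_neg hlt]
      have := h t (not_lt.1 hlt)
      linarith
  have hWint : ∀ t, Integrable (W t) μ := fun t => (hZint t).const_mul _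
  have hrecW : ∀ t, μ[W (t + 1) | ℱ t] ≤ᵐ[μ]
      fun ω => (1 + A' t ω) * W t ω + B' t ω - α' t ω * W t ω := by
    intro t
    have hsm : W (t+1) = (((t:ℝ)+1) ^ ε) • Z (t+1) := by
      funext ω
      rw [hWdef]
      simp only [Pi.smul_apply, smul_eq_mul]
      push_cast
      ring
    have hce : μ[W (t+1) | ℱ t] =ᵐ[μ]
        fun ω => (((t:ℝ)+1)^ε) * (μ[Z (t+1) | ℱ t]) ω := by
      rw [hsm]
      filter_upwards [condExp_smul (μ := μ) (m := ℱ t) (((t:ℝ)+1)^ε) (Z (t+1))] with ω h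
      rw [h]
      simp [smul_eq_mul]
    refine hce.trans_le ?_
    filter_upwards [hrec t, hA0 t, hB0 t, hZ0 t, hα0 t, hTa] with ω hr ha hb hz hal hT'
    simp only [Pi.zero_apply] at ha hb hz hal
    have hq0 : (0:ℝ) ≤ ((t:ℝ)+1)^ε := Real.rpow_nonneg (by positivity) ε
    have h1 : ((t:ℝ)+1)^ε * (μ[Z (t+1) | ℱ t]) ω ≤
        ((t:ℝ)+1)^ε * ((1 + A t ω) * Z t ω + B t ω - α t ω * Z t ω) :=
      mul_le_mul_of_nonneg_left hr hq0
    refine h1.trans ?_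
    by_cases hlt : t < T
    · simp only [hB'def, hα'def, hA'def, hWdef, if_pos hlt]
      have hp0 : (0:ℝ) ≤ (t:ℝ)^ε := Real.rpow_nonneg (Nat.cast_nonneg t) ε
      have hWnn : 0 ≤ (t:ℝ)^ε * Z t ω := mul_nonneg hp0 hz
      have halz : 0 ≤ α t ω * Z t ω := mul_nonneg hal hz
      nlinarith [mul_nonneg hq0 halz, mul_nonneg ha hWnn]
    · have hTt : T ≤ t := not_lt.1 hlt
      have ht1 : 1 ≤ t := le_trans hT1 hTt
      simp only [hB'def, hα'def, hA'def, hWdef, if_neg hlt]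
      exact rate_ineq hε0 hε1 ht1 ha hb hz (hT' t hTt)
  have hA's : ∀ᵐ ω ∂μ, Summable (fun t => A' t ω) := by
    filter_upwards [hAsum] with ω h
    simp only [hA'def]
    exact h.mul_left 2
  have hB's : ∀ᵐ ω ∂μ, Summable (fun t => B' t ω) := by
    filter_upwards [hBsum'] with ω h
    have hfin : Summable (fun t => B' t ω - ((t:ℝ)+1)^ε * B t ω) := by
      apply summable_of_ne_finset_zero (s := Finset.range T)
      intro t ht
      have : ¬ t < T := fun hc => ht (Finset.mem_range.2 hc)
      simp only [hB'def, if_neg this]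
      ring
    exact (h.add hfin).congr (fun t => by ring)
  have hα'd : ∀ᵐ ω ∂μ, Tendsto (fun m => ∑ t ∈ Finset.range m, α' t ω) atTop atTop := by
    filter_upwards [hαdiv'] with ω h
    have h2 : Tendsto (fun m => (∑ t ∈ Finset.Ico 1 m, (α t ω - ε / (t:ℝ))) +
        -(∑ t ∈ Finset.Ico 1 T, (α t ω - ε / (t:ℝ)))) atTop atTop :=
      tendsto_atTop_add_const_right _ _ h
    apply h2.congr'
    filter_upwards [eventually_ge_atTop T] with m hm
    have hsplit : (∑ t ∈ Finset.Ico 1 T, (α t ω - ε / (t:ℝ))) +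
        (∑ t ∈ Finset.Ico T m, (α t ω - ε / (t:ℝ))) =
        ∑ t ∈ Finset.Ico 1 m, (α t ω - ε / (t:ℝ)) :=
      Finset.sum_Ico_consecutive _ hT1 hm
    have hrange : ∑ t ∈ Finset.range m, α' t ω =
        ∑ t ∈ Finset.Ico T m, (α t ω - ε / (t:ℝ)) := by
      have hsub : Finset.Ico T m ⊆ Finset.range m := by
        intro x hx
        exact Finset.mem_range.2 (Finset.mem_Ico.1 hx).2
      have hzero : ∀ x ∈ Finset.range m, x ∉ Finset.Ico T m → α' x ω = 0 := by
        intro x hx hnx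
        have hxT : x < T := by
          have h1 := Finset.mem_range.1 hx
          by_contra hc
          exact hnx (Finset.mem_Ico.2 ⟨not_lt.1 hc, h1⟩)
        simp only [hα'def, if_pos hxT]
      rw [← Finset.sum_subset hsub hzero]
      exact Finset.sum_congr rfl fun x hx => by
        simp only [hα'def, if_neg (not_lt.2 (Finset.mem_Ico.1 hx).1)]
    rw [← hsplit]
    rw [hrange]
    ring
  have := rs0 μ ℱ A' B' W α' hadA' hadB' hadW hadα' hA'0 hB'0 hW0 hα'0 hWint hrecW
    hA's hB's hα'd
  exact this
end

section
/- Tail integration to moments: Suppose a non-negative random variable X satisfies P(X ≥ ε) ≤ exp(−(ε/a)^{1/C} + b) for all ε ≥ a·b^C, where a > 0, b > 0, and C is a positive integer. Then for any p ≥ 1, E[X^p] ≤ (a·b^C)^p + C·p·a^p·e^b·Γ(C·p). -/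
open MeasureTheory Real

lemma aux_integrable {p q b : ℝ} (hp : 0 < p) (hq : -1 < q) (hb : 0 < b) :
    MeasureTheory.IntegrableOn (fun x : ℝ => x ^ q * Real.exp (-b * x ^ p)) (Set.Ioi 0) := by
  have h0 : (1:ℝ)/p ≠ 0 := one_div_ne_zero hp.ne'
  have h1 : MeasureTheory.IntegrableOn
      (fun x : ℝ => x ^ ((q+1)/p - 1) * Real.exp (-b * x)) (Set.Ioi 0) := by
    have hs : (-1:ℝ) < (q+1)/p - 1 := by
      have : 0 < (q+1)/p := div_pos (by linarith) hp
      linarith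
    have := integrableOn_rpow_mul_exp_neg_mul_rpow (p := 1) (s := (q+1)/p - 1) hs one_pos hb
    simpa using this
  refine (integrableOn_Ioi_comp_rpow_iff' (fun x : ℝ => x ^ q * Real.exp (-b * x ^ p)) h0).mp ?_
  refine h1.congr_fun (fun x hx => ?_) measurableSet_Ioi
  have hx0 : (0:ℝ) < x := hx
  rw [smul_eq_mul, ← Real.rpow_mul hx0.le, ← Real.rpow_mul hx0.le,
    one_div_mul_cancel hp.ne', Real.rpow_one, ← mul_assoc, ← Real.rpow_add hx0]
  congr 2
  field_simp
  ring

lemma key_integral {a p : ℝ} {C : ℕ} (ha : 0 < a) (hp : 0 < p) (hC : 0 < C) :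
    ∫ t in Set.Ioi (0:ℝ), t ^ (p-1) * Real.exp (-(a ^ (-(1/(C:ℝ)))) * t ^ (1/(C:ℝ)))
      = a ^ p * ((C:ℝ) * Real.Gamma ((C:ℝ) * p)) := by
  have hCR : (0:ℝ) < (C:ℝ) := Nat.cast_pos.mpr hC
  have hB : (0:ℝ) < a ^ (-(1/(C:ℝ))) := Real.rpow_pos_of_pos ha _
  rw [integral_rpow_mul_exp_neg_mul_rpow (by positivity) (by linarith) hB]
  have h2 : (p - 1 + 1)/(1/(C:ℝ)) = (C:ℝ) * p := by field_simp; ring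
  rw [neg_div, h2, one_div_one_div]
  have h4 : (a ^ (-(1/(C:ℝ)))) ^ (-((C:ℝ)*p)) = a ^ p := by
    rw [← Real.rpow_mul ha.le]
    congr 1
    field_simp
  rw [h4]; ring

theorem tail_to_moments {Ω : Type*} [MeasurableSpace Ω] (μ : Measure Ω)
    [IsProbabilityMeasure μ] (X : Ω → ℝ) (hXmeas : Measurable X)
    (hX0 : ∀ ω, 0 ≤ X ω)
    (a b : ℝ) (C : ℕ) (ha : 0 < a) (hb : 0 < b) (hC : 0 < C)
    (htail : ∀ ε : ℝ, a * b ^ C ≤ ε →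
      (μ {ω | ε ≤ X ω}).toReal ≤ Real.exp (-(ε / a) ^ (1 / (C : ℝ)) + b)) :
    ∀ p : ℝ, 1 ≤ p →
      ∫⁻ ω, ENNReal.ofReal ((X ω) ^ p) ∂μ ≤
        ENNReal.ofReal ((a * b ^ C) ^ p +
          (C : ℝ) * p * a ^ p * Real.exp b * Real.Gamma ((C : ℝ) * p)) := by
  intro p hp1
  have hp0 : (0:ℝ) < p := lt_of_lt_of_le one_pos hp1
  have hCR : (0:ℝ) < (C:ℝ) := Nat.cast_pos.mpr hC
  set M : ℝ := a * b ^ C with hMdef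
  have hM : 0 < M := by positivity
  have hΓ : 0 < Real.Gamma ((C:ℝ) * p) := Real.Gamma_pos_of_pos (by positivity)
  rw [MeasureTheory.lintegral_rpow_eq_lintegral_meas_le_mul μ (Filter.Eventually.of_forall hX0)
    hXmeas.aemeasurable hp0]
  rw [← Set.Ioc_union_Ioi_eq_Ioi hM.le,
    lintegral_union measurableSet_Ioi Set.Ioc_disjoint_Ioi_same]
  -- Part 1
  have hI1 : ∫⁻ t in Set.Ioc 0 M, μ {ω | t ≤ X ω} * ENNReal.ofReal (t ^ (p-1))
      ≤ ENNReal.ofReal (M ^ p / p) := by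
    have hint : MeasureTheory.IntegrableOn (fun t : ℝ => t ^ (p-1)) (Set.Ioc 0 M) := by
      have h := intervalIntegral.intervalIntegrable_rpow'
        (a := 0) (b := M) (r := p - 1) (by linarith)
      rwa [intervalIntegrable_iff_integrableOn_Ioc_of_le hM.le] at h
    calc ∫⁻ t in Set.Ioc 0 M, μ {ω | t ≤ X ω} * ENNReal.ofReal (t ^ (p-1))
        ≤ ∫⁻ t in Set.Ioc 0 M, ENNReal.ofReal (t ^ (p-1)) := by
          refine lintegral_mono fun t => ?_
          calc μ {ω | t ≤ X ω} * ENNReal.ofReal (t ^ (p-1))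
              ≤ 1 * ENNReal.ofReal (t ^ (p-1)) := mul_le_mul_left prob_le_one _
            _ = _ := one_mul _
      _ = ENNReal.ofReal (M ^ p / p) := by
          rw [← MeasureTheory.ofReal_integral_eq_lintegral_ofReal hint ?_]
          · congr 1
            rw [← intervalIntegral.integral_of_le hM.le,
              integral_rpow (Or.inl (by linarith : (-1:ℝ) < p - 1)),
              show p - 1 + 1 = p from by ring, Real.zero_rpow hp0.ne']
            ring
          · filter_upwards [ae_restrict_mem measurableSet_Ioc] with t ht
            exact Real.rpow_nonneg ht.1.le _
  -- Part 2
  have hBpos : (0:ℝ) < a ^ (-(1/(C:ℝ))) := Real.rpow_pos_of_pos ha _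
  have hEq : Set.EqOn
      (fun t : ℝ => Real.exp b * (t ^ (p-1) * Real.exp (-(a ^ (-(1/(C:ℝ)))) * t ^ (1/(C:ℝ)))))
      (fun t : ℝ => Real.exp (-(t/a) ^ (1/(C:ℝ)) + b) * t ^ (p-1)) (Set.Ioi 0) := by
    intro t ht
    have ht0 : (0:ℝ) < t := ht
    have hrw : (t/a) ^ (1/(C:ℝ)) = a ^ (-(1/(C:ℝ))) * t ^ (1/(C:ℝ)) := by
      rw [Real.div_rpow ht0.le ha.le, div_eq_inv_mul, ← Real.rpow_neg ha.le]
    simp only [hrw, Real.exp_add, neg_mul]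
    ring
  have hIntOn : MeasureTheory.IntegrableOn
      (fun t : ℝ => Real.exp (-(t/a) ^ (1/(C:ℝ)) + b) * t ^ (p-1)) (Set.Ioi 0) := by
    have h2 : MeasureTheory.IntegrableOn
        (fun t : ℝ => Real.exp b * (t ^ (p-1) * Real.exp (-(a ^ (-(1/(C:ℝ)))) * t ^ (1/(C:ℝ)))))
        (Set.Ioi 0) :=
      (aux_integrable (p := 1/(C:ℝ)) (q := p - 1) (by positivity) (by linarith)
        hBpos).const_mul (Real.exp b)
    exact h2.congr_fun hEq measurableSet_Ioi
  have hI2 : ∫⁻ t in Set.Ioi M, μ {ω | t ≤ X ω} * ENNReal.ofReal (t ^ (p-1))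
      ≤ ENNReal.ofReal (Real.exp b * (a ^ p * ((C:ℝ) * Real.Gamma ((C:ℝ) * p)))) := by
    calc ∫⁻ t in Set.Ioi M, μ {ω | t ≤ X ω} * ENNReal.ofReal (t ^ (p-1))
        ≤ ∫⁻ t in Set.Ioi M,
            ENNReal.ofReal (Real.exp (-(t/a) ^ (1/(C:ℝ)) + b) * t ^ (p-1)) := by
          refine setLIntegral_mono' measurableSet_Ioi fun t ht => ?_
          rw [ENNReal.ofReal_mul (Real.exp_nonneg _)]
          refine mul_le_mul_left ?_ _
          rw [← ENNReal.ofReal_toReal (measure_ne_top μ _)]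
          exact ENNReal.ofReal_le_ofReal (htail t (le_of_lt ht))
      _ ≤ ∫⁻ t in Set.Ioi 0,
            ENNReal.ofReal (Real.exp (-(t/a) ^ (1/(C:ℝ)) + b) * t ^ (p-1)) :=
          lintegral_mono_set (Set.Ioi_subset_Ioi hM.le)
      _ = ENNReal.ofReal (∫ t in Set.Ioi 0,
            Real.exp (-(t/a) ^ (1/(C:ℝ)) + b) * t ^ (p-1)) := by
          rw [MeasureTheory.ofReal_integral_eq_lintegral_ofReal hIntOn ?_]
          filter_upwards [ae_restrict_mem measurableSet_Ioi] with t ht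
          have ht0 : (0:ℝ) < t := ht
          positivity
      _ = ENNReal.ofReal (Real.exp b * (a ^ p * ((C:ℝ) * Real.Gamma ((C:ℝ) * p)))) := by
          congr 1
          rw [← MeasureTheory.setIntegral_congr_fun measurableSet_Ioi hEq,
            MeasureTheory.integral_const_mul, key_integral ha hp0 hC]
  calc ENNReal.ofReal p * ((∫⁻ t in Set.Ioc 0 M, μ {ω | t ≤ X ω} * ENNReal.ofReal (t ^ (p-1)))
        + ∫⁻ t in Set.Ioi M, μ {ω | t ≤ X ω} * ENNReal.ofReal (t ^ (p-1)))
      ≤ ENNReal.ofReal p * (ENNReal.ofReal (M ^ p / p)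
        + ENNReal.ofReal (Real.exp b * (a ^ p * ((C:ℝ) * Real.Gamma ((C:ℝ) * p))))) :=
        mul_le_mul_right (add_le_add hI1 hI2) _
    _ = ENNReal.ofReal (p * (M ^ p / p
        + Real.exp b * (a ^ p * ((C:ℝ) * Real.Gamma ((C:ℝ) * p))))) := by
        rw [← ENNReal.ofReal_add (by positivity) (by positivity),
          ← ENNReal.ofReal_mul hp0.le]
    _ ≤ ENNReal.ofReal (M ^ p +
          (C : ℝ) * p * a ^ p * Real.exp b * Real.Gamma ((C : ℝ) * p)) := by
        apply ENNReal.ofReal_le_ofReal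
        apply le_of_eq
        field_simp
end
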